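/- Let S be a Polish space and N ≥ 1, and let κ_N : P(S) → P(P(S)) be the bootstrap (empirical-measure) kernel: κ_N(μ) is the pushforward of μ^{⊗N} under (x_1,…,x_N) ↦ (1/N)∑_{i=1}^N δ_{x_i}. Let (μ_n)_{n≥0} be a P(S)-valued Markov chain with kernel κ_N whose initial measure μ_0 is (almost surely) supported on a finite set. Then almost surely there exist a finite (random) time n₀ and a (random) point γ ∈ S such that μ_n = δ_γ for all n ≥ n₀; i.e., the collapse to a Dirac measure occurs in finite random time. -/

import Mathlib

open MeasureTheory Topology Filter BoundedContinuousFunction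
open scoped ENNReal NNReal

/-- The empirical measure `(1/N) ∑ᵢ δ_{x i}` of a tuple `x : Fin N → S`, as a probability
measure (for `N ≥ 1`). -/
noncomputable def empiricalMeasure {S : Type*} [MeasurableSpace S] {N : ℕ} (hN : 0 < N)
    (x : Fin N → S) : ProbabilityMeasure S :=
  ⟨(N : ℝ≥0∞)⁻¹ • ∑ i, Measure.dirac (x i), by
    constructor
    have h : (∑ i : Fin N, Measure.dirac (x i)) Set.univ = N := by
      rw [Measure.finset_sum_apply]
      simp
    rw [Measure.smul_apply, h, smul_eq_mul]
    exact ENNReal.inv_mul_cancel (by exact_mod_cast hN.ne') (by simp)⟩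

theorem integral_empiricalMeasure {S : Type*} [MeasurableSpace S] [TopologicalSpace S]
    [OpensMeasurableSpace S] {N : ℕ} (hN : 0 < N) (y : Fin N → S) (f : S →ᵇ ℝ) :
    ∫ a, f a ∂(empiricalMeasure hN y : Measure S) = (N : ℝ)⁻¹ * ∑ i, f (y i) := by
  change ∫ a, f a ∂((N : ℝ≥0∞)⁻¹ • ∑ i, Measure.dirac (y i)) = _
  rw [integral_smul_measure, integral_finset_sum_measure]
  · simp only [ENNReal.toReal_inv, ENNReal.toReal_natCast, smul_eq_mul]
    congr 1
    refine Finset.sum_congr rfl fun i _ => ?_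
    exact integral_dirac' _ _ f.continuous.stronglyMeasurable
  · intro i _
    exact f.integrable _

/-- The map `x ↦ (1/N) ∑ᵢ δ_{x i}` is continuous into `P(S)` with the topology of weak
convergence. -/
theorem continuous_empiricalMeasure {S : Type*} [MeasurableSpace S] [TopologicalSpace S]
    [OpensMeasurableSpace S] {N : ℕ} (hN : 0 < N) :
    Continuous (empiricalMeasure (S := S) hN) := by
  rw [continuous_iff_continuousAt]
  intro x
  unfold ContinuousAt
  rw [MeasureTheory.ProbabilityMeasure.tendsto_iff_forall_integral_tendsto]
  intro f
  simp only [fun y : Fin N → S => integral_empiricalMeasure hN y f]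
  apply Filter.Tendsto.const_mul
  apply tendsto_finset_sum
  intro i _
  exact (f.continuous.comp (continuous_apply i)).continuousAt

/-- The bootstrap (empirical-measure) kernel `κ_N : P(S) → P(P(S))`: `bootstrapKernel hN μ`
is the law of the empirical measure of `N` i.i.d. samples from `μ`, i.e. the pushforward of
the product measure `μ^{⊗N}` on `S^N` under the map `x ↦ (1/N) ∑ᵢ δ_{x i}`. -/
noncomputable def bootstrapKernel {S : Type*} [MeasurableSpace S] [TopologicalSpace S]
    [PolishSpace S] [BorelSpace S]
    [MeasurableSpace (ProbabilityMeasure S)] [BorelSpace (ProbabilityMeasure S)]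
    {N : ℕ} (hN : 0 < N) (μ : ProbabilityMeasure S) :
    ProbabilityMeasure (ProbabilityMeasure S) :=
  ⟨(Measure.pi fun _ : Fin N => (μ : Measure S)).map (empiricalMeasure hN),
    MeasureTheory.Measure.isProbabilityMeasure_map
      (continuous_empiricalMeasure hN).measurable.aemeasurable⟩

section mcAux

open Set

variable {S : Type*} [MeasurableSpace S] [TopologicalSpace S] [PolishSpace S] [BorelSpace S]
  [MeasurableSpace (ProbabilityMeasure S)] [BorelSpace (ProbabilityMeasure S)]

lemma mc_measurable_lintegral (f : S →ᵇ ℝ≥0) :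
    Measurable fun μ : ProbabilityMeasure S => ∫⁻ x, f x ∂(μ : Measure S) := by
  apply Continuous.measurable
  rw [continuous_iff_continuousAt]
  intro μ₀
  exact ProbabilityMeasure.tendsto_iff_forall_lintegral_tendsto.mp tendsto_id f

lemma mc_measurable_eval : ∀ ⦃B : Set S⦄, MeasurableSet B →
    Measurable fun μ : ProbabilityMeasure S => (μ : Measure S) B := by
  apply MeasurableSpace.induction_on_inter
    (C := fun B _ => Measurable fun μ : ProbabilityMeasure S => (μ : Measure S) B)
    (BorelSpace.measurable_eq.trans borel_eq_generateFrom_isClosed)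
  · intro s hs t ht _
    exact hs.inter ht
  · simpa using measurable_const
  · intro t ht
    have key : ∀ μ : ProbabilityMeasure S,
        Tendsto (fun n => ∫⁻ x, (ht.apprSeq n x : ℝ≥0∞) ∂(μ : Measure S)) atTop
          (𝓝 ((μ : Measure S) t)) := fun μ =>
      HasOuterApproxClosed.tendsto_lintegral_apprSeq ht (μ : Measure S)
    apply measurable_of_tendsto_metrizable (f := fun n (μ : ProbabilityMeasure S) =>
      ∫⁻ x, (ht.apprSeq n x : ℝ≥0∞) ∂(μ : Measure S))
    · exact fun n => mc_measurable_lintegral _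
    · rw [tendsto_pi_nhds]; exact key
  · intro t htm hm
    have : (fun μ : ProbabilityMeasure S => (μ : Measure S) tᶜ)
        = fun μ : ProbabilityMeasure S => 1 - (μ : Measure S) t := by
      funext μ; exact prob_compl_eq_one_sub htm
    rw [this]
    exact Measurable.const_sub hm 1
  · intro f hdisj hfm hm
    have : (fun μ : ProbabilityMeasure S => (μ : Measure S) (⋃ i, f i))
        = fun μ : ProbabilityMeasure S => ∑' i, (μ : Measure S) (f i) := by
      funext μ; exact measure_iUnion hdisj hfm
    rw [this]
    exact Measurable.ennreal_tsum hm

lemma mc_measurable_pi {N : ℕ} : ∀ ⦃A : Set (Fin N → S)⦄, MeasurableSet A →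
    Measurable fun μ : ProbabilityMeasure S =>
      Measure.pi (fun _ : Fin N => (μ : Measure S)) A := by
  apply MeasurableSpace.induction_on_inter
    (C := fun A _ => Measurable fun μ : ProbabilityMeasure S =>
      Measure.pi (fun _ : Fin N => (μ : Measure S)) A)
    generateFrom_pi.symm isPiSystem_pi
  · simp
  · rintro t ⟨t', ht', rfl⟩
    simp only [Measure.pi_pi]
    exact Finset.measurable_prod _ fun i _ => mc_measurable_eval (ht' i (mem_univ i))
  · intro t htm hm
    have : (fun μ : ProbabilityMeasure S => Measure.pi (fun _ : Fin N => (μ : Measure S)) tᶜ)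
        = fun μ : ProbabilityMeasure S =>
          1 - Measure.pi (fun _ : Fin N => (μ : Measure S)) t := by
      funext μ; exact prob_compl_eq_one_sub htm
    rw [this]
    exact Measurable.const_sub hm 1
  · intro f hdisj hfm hm
    have : (fun μ : ProbabilityMeasure S =>
          Measure.pi (fun _ : Fin N => (μ : Measure S)) (⋃ i, f i))
        = fun μ : ProbabilityMeasure S =>
          ∑' i, Measure.pi (fun _ : Fin N => (μ : Measure S)) (f i) := by
      funext μ; exact measure_iUnion hdisj hfm
    rw [this]
    exact Measurable.ennreal_tsum hm

lemma mc_pi_dirac {N : ℕ} (γ : S) :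
    Measure.pi (fun _ : Fin N => Measure.dirac γ) = Measure.dirac (fun _ : Fin N => γ) := by
  refine Measure.pi_eq fun t ht => ?_
  rw [Measure.dirac_apply' _ (MeasurableSet.univ_pi ht)]
  by_cases h : ∀ i, γ ∈ t i
  · rw [Set.indicator_of_mem (by simpa using h)]
    rw [Finset.prod_congr rfl fun i _ => Measure.dirac_apply_of_mem (h i)]
    simp
  · push_neg at h
    obtain ⟨i, hi⟩ := h
    rw [Set.indicator_of_notMem (by simp; exact ⟨i, hi⟩)]
    refine (Finset.prod_eq_zero (Finset.mem_univ i) ?_).symm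
    rw [Measure.dirac_apply' _ (ht i), Set.indicator_of_notMem hi]

lemma mc_empirical_const {N : ℕ} (hN : 0 < N) (γ : S) :
    empiricalMeasure hN (fun _ : Fin N => γ) = diracProba γ := by
  apply Subtype.ext
  show (N : ℝ≥0∞)⁻¹ • (∑ _i : Fin N, Measure.dirac γ) = Measure.dirac γ
  rw [Finset.sum_const, Finset.card_univ, Fintype.card_fin,
    ← Nat.cast_smul_eq_nsmul ℝ≥0∞, smul_smul,
    ENNReal.inv_mul_cancel (by exact_mod_cast hN.ne') (by simp), one_smul]

lemma mc_bootstrap_dirac {N : ℕ} (hN : 0 < N) (γ : S) :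
    (bootstrapKernel hN (diracProba γ) : Measure (ProbabilityMeasure S)) =
      Measure.dirac (diracProba γ) := by
  show (Measure.pi fun _ : Fin N => (diracProba γ : Measure S)).map (empiricalMeasure hN) = _
  have h1 : (diracProba γ : Measure S) = Measure.dirac γ := rfl
  rw [h1, mc_pi_dirac, Measure.map_dirac' (continuous_empiricalMeasure hN).measurable,
    mc_empirical_const hN γ]

lemma mc_measurableSet_range_diracProba :
    MeasurableSet (Set.range (diracProba : S → ProbabilityMeasure S)) :=
  measurableSet_range_of_continuous_injective continuous_diracProba injective_diracProba

lemma mc_exists_psi [Nonempty S] : ∃ ψ : ProbabilityMeasure S → S, Measurable ψ ∧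
    ∀ γ : S, ψ (diracProba γ) = γ := by
  have hemb : MeasurableEmbedding (diracProba : S → ProbabilityMeasure S) :=
    continuous_diracProba.measurableEmbedding injective_diracProba
  obtain ⟨ψ, hψm, hψ⟩ := hemb.exists_measurable_extend measurable_id fun _ => ‹Nonempty S›
  exact ⟨ψ, hψm, fun γ => congrFun hψ γ⟩

lemma mc_empirical_atom {N : ℕ} (hN : 0 < N) (x : Fin N → S) :
    (N : ℝ≥0∞)⁻¹ ≤ (empiricalMeasure hN x : Measure S) {x ⟨0, hN⟩} := by
  show (N : ℝ≥0∞)⁻¹ ≤ ((N : ℝ≥0∞)⁻¹ • ∑ i, Measure.dirac (x i)) {x ⟨0, hN⟩}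
  rw [Measure.smul_apply, Measure.finset_sum_apply, smul_eq_mul]
  have h1 : (1 : ℝ≥0∞) ≤ ∑ i : Fin N, Measure.dirac (x i) {x ⟨0, hN⟩} := by
    have h0 : Measure.dirac (x ⟨0, hN⟩) {x ⟨0, hN⟩} = 1 :=
      Measure.dirac_apply_of_mem (Set.mem_singleton _)
    refine le_trans (le_of_eq h0.symm) ?_
    exact Finset.single_le_sum
      (f := fun i : Fin N => Measure.dirac (x i) {x ⟨0, hN⟩})
      (fun i _ => zero_le) (Finset.mem_univ (⟨0, hN⟩ : Fin N))
  calc (N : ℝ≥0∞)⁻¹ = (N : ℝ≥0∞)⁻¹ * 1 := (mul_one _).symm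
    _ ≤ _ := mul_le_mul_right h1 _

lemma mc_kernel_dirac_lb {N : ℕ} (hN : 0 < N) (x : Fin N → S) :
    ((N : ℝ≥0∞) ^ N)⁻¹ ≤
      Measure.pi (fun _ : Fin N => (empiricalMeasure hN x : Measure S))
        (empiricalMeasure hN ⁻¹' Set.range (diracProba : S → ProbabilityMeasure S)) := by
  set a := x ⟨0, hN⟩ with ha
  have hsub : (Set.univ.pi fun _ : Fin N => ({a} : Set S)) ⊆
      empiricalMeasure hN ⁻¹' Set.range (diracProba : S → ProbabilityMeasure S) := by
    intro y hy
    have hy' : y = fun _ => a := funext fun i => hy i (mem_univ i)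
    rw [Set.mem_preimage, hy', mc_empirical_const hN a]
    exact mem_range_self _
  refine le_trans ?_ (measure_mono hsub)
  rw [Measure.pi_pi]
  calc ((N : ℝ≥0∞) ^ N)⁻¹ = ∏ _i : Fin N, (N : ℝ≥0∞)⁻¹ := by
        rw [Finset.prod_const, Finset.card_univ, Fintype.card_fin, ENNReal.inv_pow]
    _ ≤ _ := Finset.prod_le_prod' fun i _ => mc_empirical_atom hN x

end mcAux
lemma mc_key {S : Type*} [MeasurableSpace S] [TopologicalSpace S] [PolishSpace S] [BorelSpace S]
    [MeasurableSpace (ProbabilityMeasure S)] [BorelSpace (ProbabilityMeasure S)]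
    {N : ℕ} (hN : 0 < N)
    {Ω : Type*} {m0 : MeasurableSpace Ω} (P : Measure Ω) [IsProbabilityMeasure P]
    (ℱ : Filtration ℕ m0) (μ : ℕ → Ω → ProbabilityMeasure S)
    (hadp : ∀ n, Measurable[ℱ n] (μ n))
    (hMarkov : ∀ (n : ℕ) (g : ProbabilityMeasure S → ℝ), Measurable g →
      (∃ C : ℝ, ∀ ν, |g ν| ≤ C) →
      P[(fun ω => g (μ (n + 1) ω)) | ℱ n]
        =ᵐ[P] fun ω => ∫ ν, g ν ∂(bootstrapKernel hN (μ n ω) :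
          Measure (ProbabilityMeasure S)))
    (n : ℕ) (W : Ω → ℝ) (CW : ℝ) (hW : StronglyMeasurable[ℱ n] W) (hWb : ∀ ω, |W ω| ≤ CW)
    (g : ProbabilityMeasure S → ℝ) (hg : Measurable g) (Cg : ℝ) (hgb : ∀ ν, |g ν| ≤ Cg) :
    ∫ ω, W ω * g (μ (n+1) ω) ∂P =
      ∫ ω, W ω * ∫ ν, g ν ∂(bootstrapKernel hN (μ n ω) :
        Measure (ProbabilityMeasure S)) ∂P := by
  have hY : Measurable fun ω => g (μ (n+1) ω) :=
    hg.comp ((hadp (n+1)).mono (ℱ.le (n+1)) le_rfl)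
  have hYint : Integrable (fun ω => g (μ (n+1) ω)) P :=
    Integrable.mono' (integrable_const Cg) hY.aestronglyMeasurable
      (ae_of_all _ fun ω => by simpa using hgb _)
  have hWsm : AEStronglyMeasurable W P := (hW.mono (ℱ.le n)).aestronglyMeasurable
  have hWY : Integrable (fun ω => W ω * g (μ (n+1) ω)) P :=
    hYint.bdd_mul (c := CW) hWsm (ae_of_all _ fun ω => by simpa using hWb ω)
  have h1 : ∫ ω, W ω * g (μ (n+1) ω) ∂P
      = ∫ ω, (P[fun ω' => W ω' * g (μ (n+1) ω')|ℱ n]) ω ∂P :=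
    (integral_condExp (ℱ.le n)).symm
  have h2 : P[fun ω' => W ω' * g (μ (n+1) ω')|ℱ n]
      =ᵐ[P] fun ω => W ω * (P[fun ω' => g (μ (n+1) ω')|ℱ n]) ω := by
    have := condExp_mul_of_stronglyMeasurable_left hW hWY hYint
    filter_upwards [this] with ω hω using hω
  rw [h1, integral_congr_ae h2]
  apply integral_congr_ae
  filter_upwards [hMarkov n g hg ⟨Cg, hgb⟩] with ω hω
  rw [hω]

/-- Model collapse in finite time: if the initial measure of the bootstrap Markov chain
`(μ n)` is (almost surely) supported on a finite set, then almost surely there exist a finite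
(random) time `n₀` and a (random) point `γ ∈ S` such that `μ n = δ_γ` for all `n ≥ n₀`. -/
theorem model_collapse_finite_time
    {S : Type*} [MeasurableSpace S] [TopologicalSpace S] [PolishSpace S] [BorelSpace S]
    [MeasurableSpace (ProbabilityMeasure S)] [BorelSpace (ProbabilityMeasure S)]
    {N : ℕ} (hN : 0 < N)
    {Ω : Type*} {m0 : MeasurableSpace Ω} (P : Measure Ω) [IsProbabilityMeasure P]
    (ℱ : Filtration ℕ m0)
    (μ : ℕ → Ω → ProbabilityMeasure S)
    (hadp : ∀ n, Measurable[ℱ n] (μ n))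
    (hMarkov : ∀ (n : ℕ) (g : ProbabilityMeasure S → ℝ), Measurable g →
      (∃ C : ℝ, ∀ ν, |g ν| ≤ C) →
      P[(fun ω => g (μ (n + 1) ω)) | ℱ n]
        =ᵐ[P] fun ω => ∫ ν, g ν ∂(bootstrapKernel hN (μ n ω) :
          Measure (ProbabilityMeasure S)))
    (hfinite : ∀ᵐ ω ∂P, ∃ F : Finset S, (μ 0 ω : Measure S) (↑F : Set S)ᶜ = 0) :
    ∀ᵐ ω ∂P, ∃ (n₀ : ℕ) (γ : S), ∀ n ≥ n₀,
      μ n ω = (⟨Measure.dirac γ, inferInstance⟩ : ProbabilityMeasure S) := by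
  classical
  -- dispose of the degenerate case of an empty state space
  rcases isEmpty_or_nonempty S with hS | hS
  · haveI : IsEmpty (ProbabilityMeasure S) := by
      constructor
      intro ν
      have h1 : (ν : Measure S) Set.univ = 1 := measure_univ
      have h2 : (Set.univ : Set S) = ∅ := Set.univ_eq_empty_iff.mpr hS
      rw [h2, measure_empty] at h1
      exact one_ne_zero h1.symm
    haveI : IsEmpty Ω := Function.isEmpty (μ 0)
    exact ae_of_all _ fun ω => (IsEmpty.false ω).elim
  -- basic objects
  obtain ⟨ψ, hψm, hψ⟩ := mc_exists_psi (S := S)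
  have hμm : ∀ n, Measurable (μ n) := fun n => (hadp n).mono (ℱ.le n) le_rfl
  set D : Set (ProbabilityMeasure S) :=
    Set.range (diracProba : S → ProbabilityMeasure S) with hD_def
  have hD : MeasurableSet D := mc_measurableSet_range_diracProba
  letI : MetricSpace S := (TopologicalSpace.upgradeIsCompletelyMetrizable S).toMetricSpace
  obtain ⟨T, hTc, hTd⟩ := TopologicalSpace.exists_countable_dense S
  -- some helper facts
  have intbd : ∀ (f : Ω → ℝ), Measurable f → ∀ C : ℝ, (∀ ω, |f ω| ≤ C) → Integrable f P :=
    fun f hf C hC => Integrable.mono' (integrable_const C) hf.aestronglyMeasurable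
      (ae_of_all _ fun ω => by simpa using hC ω)
  have habs : ∀ a b : ℝ, |a| ≤ 1 → |b| ≤ 1 → |a * b| ≤ 1 := fun a b ha hb => by
    rw [abs_mul]; exact mul_le_one₀ ha (abs_nonneg b) hb
  have hint_dirac : ∀ (g : ProbabilityMeasure S → ℝ), Measurable g → ∀ γ : S,
      ∫ ν, g ν ∂(bootstrapKernel hN (diracProba γ) : Measure (ProbabilityMeasure S))
        = g (diracProba γ) := by
    intro g hg γ
    rw [mc_bootstrap_dirac hN γ]
    exact integral_dirac' _ _ hg.stronglyMeasurable
  -- the empirical map and the Dirac set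
  have hEmpMeas : Measurable (empiricalMeasure (S := S) hN) :=
    (continuous_empiricalMeasure hN).measurable
  -- indicator weight for the event {μ n ∈ D}
  have hwm : Measurable (D.indicator (1 : ProbabilityMeasure S → ℝ)) :=
    measurable_one.indicator hD
  have hw01 : ∀ ν : ProbabilityMeasure S, 0 ≤ D.indicator (1 : ProbabilityMeasure S → ℝ) ν ∧
      D.indicator (1 : ProbabilityMeasure S → ℝ) ν ≤ 1 := by
    intro ν
    by_cases h : ν ∈ D <;> simp [Set.indicator_of_mem, Set.indicator_of_notMem, h]
  have hwabs : ∀ ν : ProbabilityMeasure S, |D.indicator (1 : ProbabilityMeasure S → ℝ) ν| ≤ 1 :=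
    fun ν => abs_le.mpr ⟨by linarith [(hw01 ν).1], (hw01 ν).2⟩
  -- pointwise simplification of the kernel integral on the Dirac set
  have hDfactor : ∀ (n : ℕ) (V : Ω → ℝ), (∀ ω, μ n ω ∉ D → V ω = 0) →
      ∀ (g : ProbabilityMeasure S → ℝ), Measurable g →
      (fun ω => V ω * ∫ ν, g ν ∂(bootstrapKernel hN (μ n ω) :
        Measure (ProbabilityMeasure S))) = fun ω => V ω * g (μ n ω) := by
    intro n V hV g hgm
    funext ω
    by_cases hmem : μ n ω ∈ D
    · obtain ⟨γ, hγ⟩ := hmem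
      rw [← hγ, hint_dirac g hgm γ]
    · rw [hV ω hmem, zero_mul, zero_mul]
  -- test functions separating Dirac measures
  set F : S → ProbabilityMeasure S → ℝ := fun q ν => min (dist (ψ ν) q) 1 with hF_def
  have hFm : ∀ q, Measurable (F q) := fun q =>
    (((continuous_id.dist continuous_const).measurable).comp hψm).min measurable_const
  have hF01 : ∀ q ν, 0 ≤ F q ν ∧ F q ν ≤ 1 := fun q ν =>
    ⟨le_min dist_nonneg zero_le_one, min_le_right _ _⟩
  have hFabs : ∀ q ν, |F q ν| ≤ 1 := fun q ν =>
    abs_le.mpr ⟨by linarith [(hF01 q ν).1], (hF01 q ν).2⟩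
  have hFd : ∀ q γ, F q (diracProba γ) = min (dist γ q) 1 := fun q γ => by
    rw [hF_def]; simp [hψ γ]
  -- Step 1a: a.s., if μ n ∈ D then μ (n+1) ∈ D
  have hstayD : ∀ n : ℕ, ∀ᵐ ω ∂P, μ n ω ∈ D → μ (n+1) ω ∈ D := by
    intro n
    have hgm : Measurable (Dᶜ.indicator (1 : ProbabilityMeasure S → ℝ)) :=
      measurable_one.indicator hD.compl
    have hg01 : ∀ ν : ProbabilityMeasure S,
        0 ≤ Dᶜ.indicator (1 : ProbabilityMeasure S → ℝ) ν ∧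
        Dᶜ.indicator (1 : ProbabilityMeasure S → ℝ) ν ≤ 1 := by
      intro ν
      by_cases h : ν ∈ Dᶜ <;> simp [Set.indicator_of_mem, Set.indicator_of_notMem, h]
    have hgabs : ∀ ν, |Dᶜ.indicator (1 : ProbabilityMeasure S → ℝ) ν| ≤ 1 :=
      fun ν => abs_le.mpr ⟨by linarith [(hg01 ν).1], (hg01 ν).2⟩
    have hkey := mc_key hN P ℱ μ hadp hMarkov n
      (fun ω => D.indicator 1 (μ n ω)) 1
      ((hwm.comp (hadp n)).stronglyMeasurable) (fun ω => hwabs _)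
      (Dᶜ.indicator 1) hgm 1 hgabs
    rw [hDfactor n _ (fun ω hω => Set.indicator_of_notMem hω _) _ hgm] at hkey
    have hzero : (fun ω => D.indicator (1 : ProbabilityMeasure S → ℝ) (μ n ω) *
        Dᶜ.indicator (1 : ProbabilityMeasure S → ℝ) (μ n ω)) = fun _ => (0:ℝ) := by
      funext ω
      by_cases hmem : μ n ω ∈ D
      · rw [Set.indicator_of_notMem (s := Dᶜ) (fun hc => hc hmem), mul_zero]
      · rw [Set.indicator_of_notMem (s := D) hmem, zero_mul]
    rw [hzero, integral_zero] at hkey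
    have hnn : 0 ≤ᵐ[P] fun ω => D.indicator (1 : ProbabilityMeasure S → ℝ) (μ n ω) *
        Dᶜ.indicator (1 : ProbabilityMeasure S → ℝ) (μ (n+1) ω) :=
      ae_of_all _ fun ω => mul_nonneg (hw01 _).1 (hg01 _).1
    have hint : Integrable (fun ω => D.indicator (1 : ProbabilityMeasure S → ℝ) (μ n ω) *
        Dᶜ.indicator (1 : ProbabilityMeasure S → ℝ) (μ (n+1) ω)) P :=
      intbd _ ((hwm.comp (hμm n)).mul (hgm.comp (hμm (n+1)))) 1
        (fun ω => habs _ _ (hwabs _) (hgabs _))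
    have := (integral_eq_zero_iff_of_nonneg_ae hnn hint).mp hkey
    filter_upwards [this] with ω hω hmem
    by_contra hmem'
    rw [Set.indicator_of_mem hmem, Set.indicator_of_mem (by simpa using hmem')] at hω
    simp at hω
  -- Step 1b: a.s., if μ n ∈ D then F q (μ (n+1)) = F q (μ n)
  have hFstay : ∀ (n : ℕ) (q : S), ∀ᵐ ω ∂P, μ n ω ∈ D →
      F q (μ (n+1) ω) = F q (μ n ω) := by
    intro n q
    have hw0 : ∀ ω, μ n ω ∉ D → D.indicator (1 : ProbabilityMeasure S → ℝ) (μ n ω) = 0 :=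
      fun ω hω => Set.indicator_of_notMem hω _
    have hwsm : StronglyMeasurable[ℱ n]
        (fun ω => D.indicator (1 : ProbabilityMeasure S → ℝ) (μ n ω)) :=
      (hwm.comp (hadp n)).stronglyMeasurable
    -- key identity 1
    have key1 : ∫ ω, D.indicator (1 : ProbabilityMeasure S → ℝ) (μ n ω) *
          (F q (μ (n+1) ω) * F q (μ (n+1) ω)) ∂P
        = ∫ ω, D.indicator (1 : ProbabilityMeasure S → ℝ) (μ n ω) *
          (F q (μ n ω) * F q (μ n ω)) ∂P := by
      have hkey := mc_key hN P ℱ μ hadp hMarkov n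
        (fun ω => D.indicator 1 (μ n ω)) 1 hwsm (fun ω => hwabs _)
        (fun ν => F q ν * F q ν) ((hFm q).mul (hFm q)) 1
        (fun ν => habs _ _ (hFabs q ν) (hFabs q ν))
      rw [hDfactor n _ hw0 (fun ν => F q ν * F q ν) ((hFm q).mul (hFm q))] at hkey
      exact hkey
    -- key identity 2
    have key2 : ∫ ω, (D.indicator (1 : ProbabilityMeasure S → ℝ) (μ n ω) * F q (μ n ω)) *
          F q (μ (n+1) ω) ∂P
        = ∫ ω, (D.indicator (1 : ProbabilityMeasure S → ℝ) (μ n ω) * F q (μ n ω)) *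
          F q (μ n ω) ∂P := by
      have hkey := mc_key hN P ℱ μ hadp hMarkov n
        (fun ω => D.indicator (1 : ProbabilityMeasure S → ℝ) (μ n ω) * F q (μ n ω)) 1
        (hwsm.mul ((hFm q).comp (hadp n)).stronglyMeasurable)
        (fun ω => habs _ _ (hwabs _) (hFabs q _))
        (F q) (hFm q) 1 (hFabs q)
      rw [hDfactor n _ (fun ω hω => by rw [hw0 ω hω, zero_mul]) _ (hFm q)] at hkey
      exact hkey
    -- integrability of each piece
    have hwmeas : Measurable (fun ω => D.indicator (1 : ProbabilityMeasure S → ℝ) (μ n ω)) :=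
      hwm.comp (hμm n)
    have hxm : Measurable (fun ω => F q (μ (n+1) ω)) := (hFm q).comp (hμm (n+1))
    have hym : Measurable (fun ω => F q (μ n ω)) := (hFm q).comp (hμm n)
    have i3 : Integrable (fun ω => D.indicator (1 : ProbabilityMeasure S → ℝ) (μ n ω) *
        (F q (μ (n+1) ω) * F q (μ (n+1) ω))) P :=
      intbd _ (hwmeas.mul (hxm.mul hxm)) 1
        (fun ω => habs _ _ (hwabs _) (habs _ _ (hFabs q _) (hFabs q _)))
    have i4 : Integrable (fun ω => 2 * ((D.indicator (1 : ProbabilityMeasure S → ℝ) (μ n ω) *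
        F q (μ n ω)) * F q (μ (n+1) ω))) P := by
      apply Integrable.const_mul
      exact intbd _ ((hwmeas.mul hym).mul hxm) 1
        (fun ω => habs _ _ (habs _ _ (hwabs _) (hFabs q _)) (hFabs q _))
    have i2 : Integrable (fun ω => D.indicator (1 : ProbabilityMeasure S → ℝ) (μ n ω) *
        (F q (μ n ω) * F q (μ n ω))) P :=
      intbd _ (hwmeas.mul (hym.mul hym)) 1
        (fun ω => habs _ _ (hwabs _) (habs _ _ (hFabs q _) (hFabs q _)))
    -- the variance vanishes
    have hI : ∫ ω, D.indicator (1 : ProbabilityMeasure S → ℝ) (μ n ω) *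
        ((F q (μ (n+1) ω) - F q (μ n ω)) * (F q (μ (n+1) ω) - F q (μ n ω))) ∂P = 0 := by
      have hfun : (fun ω => D.indicator (1 : ProbabilityMeasure S → ℝ) (μ n ω) *
            ((F q (μ (n+1) ω) - F q (μ n ω)) * (F q (μ (n+1) ω) - F q (μ n ω))))
          = fun ω => (D.indicator (1 : ProbabilityMeasure S → ℝ) (μ n ω) *
              (F q (μ (n+1) ω) * F q (μ (n+1) ω)) -
              2 * ((D.indicator (1 : ProbabilityMeasure S → ℝ) (μ n ω) * F q (μ n ω)) *
                F q (μ (n+1) ω))) +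
              D.indicator (1 : ProbabilityMeasure S → ℝ) (μ n ω) *
                (F q (μ n ω) * F q (μ n ω)) := by
        funext ω; ring
      have i34 : Integrable (fun ω => D.indicator (1 : ProbabilityMeasure S → ℝ) (μ n ω) *
          (F q (μ (n+1) ω) * F q (μ (n+1) ω)) -
          2 * ((D.indicator (1 : ProbabilityMeasure S → ℝ) (μ n ω) * F q (μ n ω)) *
            F q (μ (n+1) ω))) P := i3.sub i4
      rw [hfun, integral_add i34 i2, integral_sub i3 i4, integral_const_mul,
        key1, key2]
      have : (fun ω => (D.indicator (1 : ProbabilityMeasure S → ℝ) (μ n ω) * F q (μ n ω)) *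
            F q (μ n ω))
          = fun ω => D.indicator (1 : ProbabilityMeasure S → ℝ) (μ n ω) *
            (F q (μ n ω) * F q (μ n ω)) := by
        funext ω; ring
      rw [this]; ring
    have hnn : 0 ≤ᵐ[P] fun ω => D.indicator (1 : ProbabilityMeasure S → ℝ) (μ n ω) *
        ((F q (μ (n+1) ω) - F q (μ n ω)) * (F q (μ (n+1) ω) - F q (μ n ω))) :=
      ae_of_all _ fun ω => mul_nonneg (hw01 _).1 (mul_self_nonneg _)
    have hint : Integrable (fun ω => D.indicator (1 : ProbabilityMeasure S → ℝ) (μ n ω) *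
        ((F q (μ (n+1) ω) - F q (μ n ω)) * (F q (μ (n+1) ω) - F q (μ n ω)))) P :=
      intbd _ (hwmeas.mul ((hxm.sub hym).mul (hxm.sub hym))) 4
        (fun ω => by
          have h1 := hFabs q (μ (n+1) ω); have h2 := hFabs q (μ n ω)
          have h3 := hwabs (μ n ω)
          have : |F q (μ (n+1) ω) - F q (μ n ω)| ≤ 2 := by
            calc |F q (μ (n+1) ω) - F q (μ n ω)| ≤ |F q (μ (n+1) ω)| + |F q (μ n ω)| :=
              abs_sub _ _
            _ ≤ 2 := by linarith
          calc |D.indicator (1 : ProbabilityMeasure S → ℝ) (μ n ω) *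
              ((F q (μ (n+1) ω) - F q (μ n ω)) * (F q (μ (n+1) ω) - F q (μ n ω)))|
              = |D.indicator (1 : ProbabilityMeasure S → ℝ) (μ n ω)| *
                (|F q (μ (n+1) ω) - F q (μ n ω)| * |F q (μ (n+1) ω) - F q (μ n ω)|) := by
                rw [abs_mul, abs_mul]
            _ ≤ 1 * (2 * 2) := by
                apply mul_le_mul h3 _ (by positivity) zero_le_one
                exact mul_le_mul this this (abs_nonneg _) (by norm_num)
            _ = 4 := by norm_num)
    have := (integral_eq_zero_iff_of_nonneg_ae hnn hint).mp hI
    filter_upwards [this] with ω hω hmem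
    have hω' : (F q (μ (n+1) ω) - F q (μ n ω)) * (F q (μ (n+1) ω) - F q (μ n ω)) = 0 := by
      simpa [Set.indicator_of_mem hmem] using hω
    exact sub_eq_zero.mp (mul_self_eq_zero.mp hω')
  -- Step 1: a.s., if μ n ∈ D then μ (n+1) = μ n
  have hstay : ∀ n : ℕ, ∀ᵐ ω ∂P, μ n ω ∈ D → μ (n+1) ω = μ n ω := by
    intro n
    filter_upwards [hstayD n, (MeasureTheory.ae_ball_iff hTc).mpr (fun q _ => hFstay n q)]
      with ω h1 h2 hmem
    obtain ⟨γ, hγ⟩ := hmem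
    obtain ⟨γ', hγ'⟩ := h1 ⟨γ, hγ⟩
    have hqq : ∀ q ∈ T, min (dist γ' q) 1 = min (dist γ q) 1 := by
      intro q hq
      have := h2 q hq ⟨γ, hγ⟩
      rw [← hγ, ← hγ', hFd, hFd] at this
      exact this
    have hγγ' : γ' = γ := by
      by_contra hne
      have hd : 0 < dist γ γ' := dist_pos.mpr fun h => hne (h.symm)
      set r : ℝ := min (dist γ γ' / 2) 2⁻¹ with hr_def
      have hr : 0 < r := lt_min (by linarith) (by norm_num)
      obtain ⟨q, hqmem⟩ := (Metric.dense_iff.mp hTd γ r hr)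
      have hqT : q ∈ T := hqmem.2
      have hdq : dist γ q < r := by
        have := hqmem.1
        rwa [Metric.mem_ball, dist_comm] at this
      have hdq1 : dist γ q < 1 := lt_of_lt_of_le hdq (le_trans (min_le_right _ _) (by norm_num))
      have heq := hqq q hqT
      rw [min_eq_left hdq1.le] at heq
      have hd'q : dist γ' q = dist γ q := by
        rcases le_or_gt (dist γ' q) 1 with h | h
        · rwa [min_eq_left h] at heq
        · rw [min_eq_right h.le] at heq
          linarith
      have htri : dist γ γ' ≤ dist γ q + dist q γ' := dist_triangle _ _ _
      rw [dist_comm q γ', hd'q] at htri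
      have hr2 : r ≤ dist γ γ' / 2 := min_le_left _ _
      linarith
    rw [← hγ, ← hγ', hγγ']
  -- the kernel-based quantities
  set Φ : ProbabilityMeasure S → ℝ≥0∞ := fun m =>
    Measure.pi (fun _ : Fin N => (m : Measure S)) (empiricalMeasure hN ⁻¹' D) with hΦ_def
  have hΦm : Measurable Φ := mc_measurable_pi (hEmpMeas hD)
  set p : ℝ≥0∞ := ((N : ℝ≥0∞) ^ N)⁻¹ with hp_def
  have hNne : (N : ℝ≥0∞) ≠ 0 := by exact_mod_cast hN.ne'
  have hpNtop : (N : ℝ≥0∞) ^ N ≠ ∞ := ENNReal.pow_ne_top (ENNReal.natCast_ne_top N)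
  have hpN0 : (N : ℝ≥0∞) ^ N ≠ 0 := pow_ne_zero _ hNne
  have hp_pos : 0 < p := ENNReal.inv_pos.mpr hpNtop
  have hp_ne_top : p ≠ ∞ := ENNReal.inv_ne_top.mpr hpN0
  have hp_le_one : p ≤ 1 := by
    rw [hp_def]
    rw [ENNReal.inv_le_one]
    exact one_le_pow_of_one_le' (by exact_mod_cast hN : (1:ℝ≥0∞) ≤ (N:ℝ≥0∞)) N
  set pR : ℝ := p.toReal with hpR_def
  have hpR_pos : 0 < pR := ENNReal.toReal_pos hp_pos.ne' hp_ne_top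
  have hpR_le_one : pR ≤ 1 := by
    have := ENNReal.toReal_mono ENNReal.one_ne_top hp_le_one
    simpa using this
  set E' : Set (ProbabilityMeasure S) := {m | p ≤ Φ m} with hE'_def
  have hE'm : MeasurableSet E' := measurableSet_le measurable_const hΦm
  have hEmpE' : ∀ x : Fin N → S, empiricalMeasure hN x ∈ E' := fun x =>
    mc_kernel_dirac_lb hN x
  have hKD : ∀ m : ProbabilityMeasure S,
      (bootstrapKernel hN m : Measure (ProbabilityMeasure S)) D = Φ m := by
    intro m
    show (Measure.pi fun _ : Fin N => (m : Measure S)).map (empiricalMeasure hN) D = _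
    rw [Measure.map_apply hEmpMeas hD]
  have hKE'c : ∀ m : ProbabilityMeasure S,
      (bootstrapKernel hN m : Measure (ProbabilityMeasure S)) E'ᶜ = 0 := by
    intro m
    show (Measure.pi fun _ : Fin N => (m : Measure S)).map (empiricalMeasure hN) E'ᶜ = 0
    rw [Measure.map_apply hEmpMeas hE'm.compl]
    have hemp : empiricalMeasure hN ⁻¹' E'ᶜ = (∅ : Set (Fin N → S)) := by
      ext x
      simp [hEmpE' x]
    rw [hemp, measure_empty]
  -- Step 2a: a.s. μ (n+1) ∈ E'
  have hE'ae : ∀ n : ℕ, ∀ᵐ ω ∂P, μ (n+1) ω ∈ E' := by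
    intro n
    have hgm : Measurable (E'ᶜ.indicator (1 : ProbabilityMeasure S → ℝ)) :=
      measurable_one.indicator hE'm.compl
    have hg01 : ∀ ν : ProbabilityMeasure S,
        0 ≤ E'ᶜ.indicator (1 : ProbabilityMeasure S → ℝ) ν ∧
        E'ᶜ.indicator (1 : ProbabilityMeasure S → ℝ) ν ≤ 1 := by
      intro ν
      by_cases h : ν ∈ E'ᶜ <;> simp [Set.indicator_of_mem, Set.indicator_of_notMem, h]
    have hgabs : ∀ ν, |E'ᶜ.indicator (1 : ProbabilityMeasure S → ℝ) ν| ≤ 1 :=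
      fun ν => abs_le.mpr ⟨by linarith [(hg01 ν).1], (hg01 ν).2⟩
    have hkey := mc_key hN P ℱ μ hadp hMarkov n (fun _ => (1:ℝ)) 1
      stronglyMeasurable_const (fun ω => by norm_num)
      (E'ᶜ.indicator 1) hgm 1 hgabs
    have hrhs : (fun ω => (1:ℝ) * ∫ ν, E'ᶜ.indicator (1 : ProbabilityMeasure S → ℝ) ν
        ∂(bootstrapKernel hN (μ n ω) : Measure (ProbabilityMeasure S))) = fun _ => (0:ℝ) := by
      funext ω
      rw [one_mul, integral_indicator_one hE'm.compl, measureReal_def, hKE'c, ENNReal.toReal_zero]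
    rw [hrhs, integral_zero] at hkey
    simp_rw [one_mul] at hkey
    have hnn : 0 ≤ᵐ[P] fun ω => E'ᶜ.indicator (1 : ProbabilityMeasure S → ℝ) (μ (n+1) ω) :=
      ae_of_all _ fun ω => (hg01 _).1
    have hint : Integrable
        (fun ω => E'ᶜ.indicator (1 : ProbabilityMeasure S → ℝ) (μ (n+1) ω)) P :=
      intbd _ (hgm.comp (hμm (n+1))) 1 (fun ω => hgabs _)
    have := (integral_eq_zero_iff_of_nonneg_ae hnn hint).mp hkey
    filter_upwards [this] with ω hω
    by_contra hmem
    rw [Set.indicator_of_mem (by simpa using hmem)] at hω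
    simp at hω
  -- Step 2b: geometric decay of the no-Dirac event
  set A : ℕ → Set Ω := fun m => ⋂ k ∈ Finset.Icc 1 m, μ k ⁻¹' Dᶜ with hA_def
  have hAmF : ∀ m, MeasurableSet[ℱ m] (A m) := by
    intro m
    apply Finset.measurableSet_biInter
    intro k hk
    exact ℱ.mono (Finset.mem_Icc.mp hk).2 _ ((hadp k) hD.compl)
  have hAm0 : ∀ m, MeasurableSet (A m) := fun m => ℱ.le m _ (hAmF m)
  have hsucc : ∀ n, A (n+1) = A n ∩ μ (n+1) ⁻¹' Dᶜ := by
    intro n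
    simp only [hA_def]
    rw [show Finset.Icc 1 (n+1) = insert (n+1) (Finset.Icc 1 n) by
      ext k; simp only [Finset.mem_Icc, Finset.mem_insert]; omega]
    rw [Finset.set_biInter_insert]
    exact Set.inter_comm _ _
  have hstep : ∀ n, 1 ≤ n → (P (A (n+1))).toReal ≤ (1 - pR) * (P (A n)).toReal := by
    intro n hn
    have hWsm : StronglyMeasurable[ℱ n] ((A n).indicator (fun _ => (1:ℝ))) :=
      stronglyMeasurable_const.indicator (hAmF n)
    have hWabs : ∀ ω, |(A n).indicator (fun _ => (1:ℝ)) ω| ≤ 1 := by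
      intro ω
      by_cases h : ω ∈ A n <;>
        simp [Set.indicator_of_mem, Set.indicator_of_notMem, h]
    have hW0 : ∀ ω, 0 ≤ (A n).indicator (fun _ => (1:ℝ)) ω := by
      intro ω
      by_cases h : ω ∈ A n <;>
        simp [Set.indicator_of_mem, Set.indicator_of_notMem, h]
    have hgm : Measurable (Dᶜ.indicator (1 : ProbabilityMeasure S → ℝ)) :=
      measurable_one.indicator hD.compl
    have hgabs : ∀ ν, |Dᶜ.indicator (1 : ProbabilityMeasure S → ℝ) ν| ≤ 1 := by
      intro ν
      by_cases h : ν ∈ Dᶜ <;>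
        simp [Set.indicator_of_mem, Set.indicator_of_notMem, h]
    have hkey := mc_key hN P ℱ μ hadp hMarkov n
      ((A n).indicator (fun _ => (1:ℝ))) 1 hWsm hWabs
      (Dᶜ.indicator 1) hgm 1 hgabs
    -- LHS is the measure of A (n+1)
    have hlhs : (fun ω => (A n).indicator (fun _ => (1:ℝ)) ω *
        Dᶜ.indicator (1 : ProbabilityMeasure S → ℝ) (μ (n+1) ω))
        = (A (n+1)).indicator (fun _ => (1:ℝ)) := by
      funext ω
      rw [hsucc n]

      by_cases h1 : ω ∈ A n
      · by_cases h2 : μ (n+1) ω ∈ Dᶜ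
        · rw [Set.indicator_of_mem h1, Set.indicator_of_mem h2,
            Set.indicator_of_mem (Set.mem_inter h1 h2)]
          simp
        · rw [Set.indicator_of_notMem h2,
            Set.indicator_of_notMem
              (fun h : ω ∈ A n ∩ μ (n+1) ⁻¹' Dᶜ => h2 h.2), mul_zero]
      · rw [Set.indicator_of_notMem h1,
          Set.indicator_of_notMem
            (fun h : ω ∈ A n ∩ μ (n+1) ⁻¹' Dᶜ => h1 h.1), zero_mul]
    have hlhs2 : ∫ ω, (A n).indicator (fun _ => (1:ℝ)) ω *
        Dᶜ.indicator (1 : ProbabilityMeasure S → ℝ) (μ (n+1) ω) ∂P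
        = (P (A (n+1))).toReal := by
      rw [show (fun ω => (A n).indicator (fun _ => (1:ℝ)) ω *
        Dᶜ.indicator (1 : ProbabilityMeasure S → ℝ) (μ (n+1) ω))
        = (A (n+1)).indicator (fun _ => (1:ℝ)) from hlhs]
      exact integral_indicator_one (hAm0 (n+1))
    rw [hlhs2] at hkey
    -- bound the RHS
    have hinner_meas : Measurable (fun ω => ∫ ν,
        Dᶜ.indicator (1 : ProbabilityMeasure S → ℝ) ν
        ∂(bootstrapKernel hN (μ n ω) : Measure (ProbabilityMeasure S))) := by
      have heq : (fun ω => ∫ ν, Dᶜ.indicator (1 : ProbabilityMeasure S → ℝ) ν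
          ∂(bootstrapKernel hN (μ n ω) : Measure (ProbabilityMeasure S)))
          = fun ω => (Measure.pi (fun _ : Fin N => (μ n ω : Measure S))
            (empiricalMeasure hN ⁻¹' Dᶜ)).toReal := by
        funext ω
        rw [integral_indicator_one hD.compl, measureReal_def]
        congr 1
        show (Measure.pi fun _ : Fin N => ((μ n ω : ProbabilityMeasure S) : Measure S)).map
          (empiricalMeasure hN) Dᶜ = _
        rw [Measure.map_apply hEmpMeas hD.compl]
      rw [heq]
      exact ((mc_measurable_pi (hEmpMeas hD.compl)).comp (hμm n)).ennreal_toReal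
    have hinner01 : ∀ ω, 0 ≤ (∫ ν, Dᶜ.indicator (1 : ProbabilityMeasure S → ℝ) ν
        ∂(bootstrapKernel hN (μ n ω) : Measure (ProbabilityMeasure S))) ∧
        (∫ ν, Dᶜ.indicator (1 : ProbabilityMeasure S → ℝ) ν
        ∂(bootstrapKernel hN (μ n ω) : Measure (ProbabilityMeasure S))) ≤ 1 := by
      intro ω
      rw [integral_indicator_one hD.compl, measureReal_def]
      constructor
      · exact ENNReal.toReal_nonneg
      · have h1 : (bootstrapKernel hN (μ n ω) : Measure (ProbabilityMeasure S)) Dᶜ ≤ 1 :=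
          prob_le_one
        have := ENNReal.toReal_mono ENNReal.one_ne_top h1
        simpa using this
    -- a.e. bound using E'-membership
    obtain ⟨m, rfl⟩ := Nat.exists_eq_succ_of_ne_zero (show n ≠ 0 by omega)
    have hbd : ∀ᵐ ω ∂P, (A (m+1)).indicator (fun _ => (1:ℝ)) ω *
        (∫ ν, Dᶜ.indicator (1 : ProbabilityMeasure S → ℝ) ν
        ∂(bootstrapKernel hN (μ (m+1) ω) : Measure (ProbabilityMeasure S)))
        ≤ (A (m+1)).indicator (fun _ => (1:ℝ)) ω * (1 - pR) := by
      filter_upwards [hE'ae m] with ω hmemE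
      apply mul_le_mul_of_nonneg_left _ (hW0 ω)
      rw [integral_indicator_one hD.compl, measureReal_def]
      have hcompl : (bootstrapKernel hN (μ (m+1) ω) : Measure (ProbabilityMeasure S)) Dᶜ
          = 1 - (bootstrapKernel hN (μ (m+1) ω) : Measure (ProbabilityMeasure S)) D :=
        prob_compl_eq_one_sub hD
      have hge : p ≤ (bootstrapKernel hN (μ (m+1) ω) : Measure (ProbabilityMeasure S)) D := by
        rw [hKD]
        exact hmemE
      have hle : (bootstrapKernel hN (μ (m+1) ω) : Measure (ProbabilityMeasure S)) Dᶜ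
          ≤ 1 - p := by
        rw [hcompl]
        exact tsub_le_tsub_left hge 1
      have h1p : (1 - p : ℝ≥0∞) ≠ ∞ := by
        have : (1 - p : ℝ≥0∞) ≤ 1 := tsub_le_self
        exact (this.trans_lt ENNReal.one_lt_top).ne
      calc ((bootstrapKernel hN (μ (m+1) ω) : Measure (ProbabilityMeasure S)) Dᶜ).toReal
          ≤ (1 - p : ℝ≥0∞).toReal := ENNReal.toReal_mono h1p hle
        _ = 1 - pR := by
            rw [ENNReal.toReal_sub_of_le hp_le_one ENNReal.one_ne_top]
            simp [hpR_def]
    -- integrate the bound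
    have hintL : Integrable (fun ω => (A (m+1)).indicator (fun _ => (1:ℝ)) ω *
        (∫ ν, Dᶜ.indicator (1 : ProbabilityMeasure S → ℝ) ν
        ∂(bootstrapKernel hN (μ (m+1) ω) : Measure (ProbabilityMeasure S)))) P := by
      apply intbd _ (((stronglyMeasurable_const.indicator (hAm0 (m+1))).measurable).mul
        hinner_meas) 1
      intro ω
      apply habs _ _ (hWabs ω)
      exact abs_le.mpr ⟨by linarith [(hinner01 ω).1], (hinner01 ω).2⟩
    have hintR : Integrable (fun ω => (A (m+1)).indicator (fun _ => (1:ℝ)) ω * (1 - pR)) P := by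
      apply intbd _ (((stronglyMeasurable_const.indicator (hAm0 (m+1))).measurable).mul
        measurable_const) 1
      intro ω
      apply habs _ _ (hWabs ω)
      rw [abs_of_nonneg (by linarith)]
      linarith
    have hfinal := integral_mono_ae hintL hintR hbd
    rw [hkey]
    calc ∫ ω, (A (m+1)).indicator (fun _ => (1:ℝ)) ω *
          (∫ ν, Dᶜ.indicator (1 : ProbabilityMeasure S → ℝ) ν
          ∂(bootstrapKernel hN (μ (m+1) ω) : Measure (ProbabilityMeasure S))) ∂P
        ≤ ∫ ω, (A (m+1)).indicator (fun _ => (1:ℝ)) ω * (1 - pR) ∂P := hfinal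
      _ = (1 - pR) * (P (A (m+1))).toReal := by
          rw [show (fun ω => (A (m+1)).indicator (fun _ => (1:ℝ)) ω * (1 - pR))
            = fun ω => (1 - pR) * (A (m+1)).indicator (1 : Ω → ℝ) ω from
            funext fun ω => mul_comm _ _]
          rw [integral_const_mul]
          rw [integral_indicator_one (hAm0 (m+1)), measureReal_def]
  -- geometric bound
  have hgeom : ∀ m : ℕ, (P (A (m+1))).toReal ≤ (1 - pR) ^ m := by
    intro m
    induction m with
    | zero =>
      simp only [pow_zero]
      have h1 : P (A 1) ≤ 1 := prob_le_one
      have := ENNReal.toReal_mono ENNReal.one_ne_top h1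
      simpa using this
    | succ m ih =>
      calc (P (A (m+2))).toReal ≤ (1 - pR) * (P (A (m+1))).toReal := hstep (m+1) (by omega)
        _ ≤ (1 - pR) * (1 - pR) ^ m :=
            mul_le_mul_of_nonneg_left ih (by linarith)
        _ = (1 - pR) ^ (m+1) := (pow_succ' _ _).symm
  -- the "never hits a Dirac" event is null
  have hBad : P (⋂ k : ℕ, μ (k+1) ⁻¹' Dᶜ) = 0 := by
    set Bad := ⋂ k : ℕ, μ (k+1) ⁻¹' Dᶜ with hBad_def
    have hsub : ∀ m : ℕ, Bad ⊆ A (m+1) := by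
      intro m ω hω
      simp only [hA_def]
      simp only [Set.mem_iInter]
      intro k hk
      have hk1 : 1 ≤ k := (Finset.mem_Icc.mp hk).1
      have := Set.mem_iInter.mp hω (k-1)
      rwa [show k - 1 + 1 = k by omega] at this
    have hBadle : ∀ m : ℕ, (P Bad).toReal ≤ (1 - pR) ^ m := fun m =>
      le_trans (ENNReal.toReal_mono (measure_ne_top _ _) (measure_mono (hsub m))) (hgeom m)
    have htend : Tendsto (fun m : ℕ => (1 - pR) ^ m) atTop (𝓝 0) := by
      apply tendsto_pow_atTop_nhds_zero_of_lt_one (by linarith) (by linarith)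
    have hle0 : (P Bad).toReal ≤ 0 := ge_of_tendsto htend (Eventually.of_forall hBadle)
    have : (P Bad).toReal = 0 := le_antisymm hle0 ENNReal.toReal_nonneg
    rwa [ENNReal.toReal_eq_zero_iff, or_iff_left (measure_ne_top _ _)] at this
  have hhit : ∀ᵐ ω ∂P, ∃ k : ℕ, μ (k+1) ω ∈ D := by
    have h := (MeasureTheory.measure_eq_zero_iff_ae_notMem).mp hBad
    filter_upwards [h] with ω hω
    simp only [Set.mem_iInter, Set.mem_preimage, Set.mem_compl_iff, not_forall, not_not] at hω
    exact hω
  -- final assembly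
  filter_upwards [ae_all_iff.mpr hstay, hhit] with ω hst hh
  obtain ⟨k, γ, hγ⟩ : ∃ (k : ℕ) (γ : S), diracProba γ = μ (k+1) ω := by
    obtain ⟨k, hk⟩ := hh
    obtain ⟨γ, hγ⟩ := hk
    exact ⟨k, γ, hγ⟩
  refine ⟨k+1, γ, ?_⟩
  have hconst : ∀ j : ℕ, μ (k+1+j) ω = μ (k+1) ω := by
    intro j
    induction j with
    | zero => rfl
    | succ j ih =>
      have hmem : μ (k+1+j) ω ∈ D := by
        rw [ih, ← hγ]
        exact Set.mem_range_self γ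
      have hone := hst (k+1+j) hmem
      rw [show k+1+(j+1) = (k+1+j)+1 by omega, hone, ih]
  intro n hn
  have hμn : μ n ω = μ (k+1) ω := by
    have := hconst (n - (k+1))
    rwa [show k+1+(n-(k+1)) = n by omega] at this
  rw [hμn, ← hγ]
  rfl
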